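/- arXiv:2004.04716 — 7 statements merged into one kernel-verified Lean document; each statement's English description precedes it below -/
import Mathlib

section
/- For 0 ≤ i ≤ n−4 define the operator L_i on A⟦t⟧ by L_i(V) := t²·P·V″ + t·(t·P′ − 2i·P)·V′ + (i·(i+1)·P − i·t·P′ + t²·P1)·V. If y ∈ A⟦t⟧ satisfies L(y) = 0, then (L_i ∘ L)(∂_i y) = 0; that is, the fourth-order operator M_i := L_i ∘ L annihilates the derivative of y with respect to the accessory parameter ρ_i. -/
noncomputable section

open PowerSeries

/-- The ring of accessory parameters: polynomials in `ρ_0, …, ρ_{n-4}` over `ℂ`. -/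
abbrev AccRing (n : ℕ) : Type := MvPolynomial (Fin (n - 3)) ℂ

/-- Coefficientwise partial derivative of a power series with respect to the
accessory parameter `ρ_i`. -/
noncomputable def pd {n : ℕ} (i : Fin (n - 3)) (u : PowerSeries (AccRing n)) :
    PowerSeries (AccRing n) :=
  PowerSeries.mk fun m => MvPolynomial.pderiv i (PowerSeries.coeff (R := AccRing n) m u)

/-- The polynomial `P = t·∏_{j=1}^{n-2}(t - α_j)`, viewed in `A⟦t⟧`. -/
noncomputable def Ppoly (n : ℕ) (α : Fin (n - 2) → ℂ) : PowerSeries (AccRing n) :=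
  X * ∏ j, (X - C (R := AccRing n) (MvPolynomial.C (α j)))

/-- The polynomial `P̂ = P/t = ∏_{j=1}^{n-2}(t - α_j)`, viewed in `A⟦t⟧`. -/
noncomputable def PhatPoly (n : ℕ) (α : Fin (n - 2) → ℂ) : PowerSeries (AccRing n) :=
  ∏ j, (X - C (R := AccRing n) (MvPolynomial.C (α j)))

/-- `κ = P̂(0) = (-1)^(n-2) ∏ α_j`. -/
noncomputable def kappa (n : ℕ) (α : Fin (n - 2) → ℂ) : ℂ :=
  (-1) ^ (n - 2) * ∏ j, α j

/-- `P1 = (1 - n/2)²·t^(n-3) - ∑_{i=0}^{n-4} ρ_i·t^i`, viewed in `A⟦t⟧`. -/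
noncomputable def P1poly (n : ℕ) : PowerSeries (AccRing n) :=
  C (R := AccRing n) (MvPolynomial.C ((1 - (n : ℂ) / 2) ^ 2)) * X ^ (n - 3)
    - ∑ i : Fin (n - 3), C (R := AccRing n) (MvPolynomial.X i) * X ^ (i : ℕ)

/-- The differential operator `L u = (P·u')' + P1·u`. -/
noncomputable def Lop (n : ℕ) (α : Fin (n - 2) → ℂ) (u : PowerSeries (AccRing n)) :
    PowerSeries (AccRing n) :=
  derivative (AccRing n) (Ppoly n α * derivative (AccRing n) u) + P1poly n * u

/-- Formal antiderivative with zero constant term. -/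
noncomputable def integ {A : Type*} [CommRing A] [Algebra ℚ A] (u : PowerSeries A) :
    PowerSeries A :=
  PowerSeries.mk fun m => if m = 0 then 0 else ((m : ℚ)⁻¹) • PowerSeries.coeff (R := A) (m - 1) u

/-- Formal substitution of the power series `S` (with zero constant term) into `G`. -/
noncomputable def substS {A : Type*} [CommSemiring A] (S G : PowerSeries A) : PowerSeries A :=
  PowerSeries.mk fun m =>
    ∑ j ∈ Finset.range (m + 1), PowerSeries.coeff (R := A) j G * PowerSeries.coeff (R := A) m (S ^ j)

/-- The operator `θ G = X·dG/dX`. -/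
noncomputable def theta {A : Type*} [CommRing A] (G : PowerSeries A) : PowerSeries A :=
  PowerSeries.X * PowerSeries.derivative A G

/-- The formal Eichler integral: divide the `m`-th coefficient by `m³`. -/
noncomputable def eich {A : Type*} [CommRing A] [Algebra ℚ A] (H : PowerSeries A) :
    PowerSeries A :=
  PowerSeries.mk fun m => (((m : ℚ) ^ 3)⁻¹) • PowerSeries.coeff (R := A) m H

/-- Formal exponential of a power series with zero constant term. -/
noncomputable def expS {A : Type*} [CommRing A] [Algebra ℚ A] (S : PowerSeries A) :
    PowerSeries A :=
  substS S (PowerSeries.exp A)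

-- basic pd lemmas
variable {n : ℕ} (i : Fin (n - 3))

lemma pd_coeff (u : PowerSeries (AccRing n)) (m : ℕ) :
    coeff (R := AccRing n) m (pd i u) = MvPolynomial.pderiv i (coeff (R := AccRing n) m u) := by
  simp [pd]

lemma pd_add (u v : PowerSeries (AccRing n)) : pd i (u + v) = pd i u + pd i v := by
  ext m; simp [pd_coeff]

lemma pd_mul (u v : PowerSeries (AccRing n)) :
    pd i (u * v) = pd i u * v + u * pd i v := by
  ext m
  simp only [pd_coeff, map_add, coeff_mul, map_sum, MvPolynomial.pderiv_mul,
    Finset.sum_add_distrib]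

lemma pd_derivative (u : PowerSeries (AccRing n)) :
    pd i (derivative (AccRing n) u) = derivative (AccRing n) (pd i u) := by
  ext m
  simp [pd_coeff, coeff_derivative, mul_comm]

lemma pd_CC (c : ℂ) : pd i (C (R := AccRing n) (MvPolynomial.C c)) = 0 := by
  ext m
  simp only [pd_coeff, coeff_C, map_zero]
  split <;> simp

lemma pd_X : pd i (X : PowerSeries (AccRing n)) = 0 := by
  ext m
  simp only [pd_coeff, coeff_X, map_zero]
  split <;> simp

lemma pd_Xpow (k : ℕ) : pd i ((X : PowerSeries (AccRing n)) ^ k) = 0 := by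
  ext m
  simp only [pd_coeff, coeff_X_pow, map_zero]
  split <;> simp

lemma pd_sub (u v : PowerSeries (AccRing n)) : pd i (u - v) = pd i u - pd i v := by
  ext m; simp [pd_coeff]

lemma pd_prod (s : Finset (Fin (n - 2))) (α : Fin (n - 2) → ℂ) :
    pd i (∏ j ∈ s, ((X : PowerSeries (AccRing n)) - C (R := AccRing n) (MvPolynomial.C (α j)))) = 0 := by
  induction s using Finset.induction with
  | empty => ext m; simp only [Finset.prod_empty, pd_coeff, coeff_one, map_zero]; split <;> simp
  | insert _ _ hj ih =>
      rw [Finset.prod_insert hj, pd_mul, ih, pd_sub, pd_X, pd_CC]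
      simp

lemma pd_Ppoly (α : Fin (n - 2) → ℂ) : pd i (Ppoly n α) = 0 := by
  rw [Ppoly, pd_mul, pd_X, pd_prod]
  simp

lemma pd_P1poly : pd i (P1poly n) = -(X : PowerSeries (AccRing n)) ^ (i : ℕ) := by
  rw [P1poly, pd_sub, pd_mul, pd_CC, pd_Xpow]
  have h1 : pd i (∑ j : Fin (n - 3), C (R := AccRing n) (MvPolynomial.X j) * X ^ (j : ℕ))
      = (X : PowerSeries (AccRing n)) ^ (i : ℕ) := by
    have : ∀ j : Fin (n - 3), pd i (C (R := AccRing n) (MvPolynomial.X j) * X ^ (j : ℕ))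
        = if j = i then (X : PowerSeries (AccRing n)) ^ (i : ℕ) else 0 := by
      intro j
      rw [pd_mul, pd_Xpow, mul_zero, add_zero]
      have hc : pd i (C (R := AccRing n) (MvPolynomial.X j))
          = C (R := AccRing n) (MvPolynomial.pderiv i (MvPolynomial.X j)) := by
        ext m
        simp only [pd_coeff, coeff_C]
        split <;> simp
      rw [hc, MvPolynomial.pderiv_X]
      by_cases h : j = i
      · subst h; simp [Pi.single_eq_same]
      · simp [Pi.single_eq_of_ne h, h]
    have hsum : pd i (∑ j : Fin (n - 3), C (R := AccRing n) (MvPolynomial.X j) * X ^ (j : ℕ))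
        = ∑ j : Fin (n - 3), pd i (C (R := AccRing n) (MvPolynomial.X j) * X ^ (j : ℕ)) := by
      ext m; simp [pd_coeff]
    rw [hsum]
    simp only [this]
    simp
  rw [h1]; simp

lemma pd_Lop (α : Fin (n - 2) → ℂ) (u : PowerSeries (AccRing n)) :
    pd i (Lop n α u) = Lop n α (pd i u) - X ^ (i : ℕ) * u := by
  rw [Lop, Lop, pd_add, pd_derivative, pd_mul, pd_Ppoly, pd_mul, pd_P1poly, pd_derivative]
  ring_nf

lemma hx1' {A : Type*} [CommRing A] (k : ℕ) :
    (X : PowerSeries A) * derivative A (X ^ k) = (k : PowerSeries A) * X ^ k := by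
  cases k with
  | zero => simp
  | succ m =>
      rw [Derivation.leibniz_pow]
      simp only [derivative_X, Nat.add_sub_cancel, smul_eq_mul, mul_one, nsmul_eq_mul]
      push_cast
      ring

lemma hx2' {A : Type*} [CommRing A] (k : ℕ) :
    (X : PowerSeries A) ^ 2 * derivative A (derivative A (X ^ k))
      = (k : PowerSeries A) * ((k : PowerSeries A) - 1) * X ^ k := by
  match k with
  | 0 => simp
  | 1 => simp
  | (m+2) =>
      rw [Derivation.leibniz_pow]
      simp only [derivative_X, smul_eq_mul, mul_one, nsmul_eq_mul, Nat.add_sub_cancel, map_mul]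
      rw [show ((m+2 : ℕ) : PowerSeries A) * X ^ (m + 2 - 1)
          = (m+2 : ℕ) • ((X : PowerSeries A) ^ (m + 1)) from by simp [nsmul_eq_mul],
        map_nsmul, Derivation.leibniz_pow]
      simp only [derivative_X, smul_eq_mul, mul_one, nsmul_eq_mul, Nat.add_sub_cancel]
      push_cast
      ring


/-- the fourth-order operator `M_i = L_i ∘ L` annihilates `∂_i y` whenever
`L(y) = 0`. -/
theorem stmt2 (n : ℕ) (hn : 4 ≤ n) (α : Fin (n - 2) → ℂ)
    (hα0 : ∀ j, α j ≠ 0) (hαinj : Function.Injective α)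
    (i : Fin (n - 3))
    (Li : PowerSeries (AccRing n) → PowerSeries (AccRing n))
    (hLi : ∀ V, Li V =
      X ^ 2 * Ppoly n α * derivative (AccRing n) (derivative (AccRing n) V)
        + X * (X * derivative (AccRing n) (Ppoly n α)
            - 2 * ((i : ℕ) : PowerSeries (AccRing n)) * Ppoly n α) * derivative (AccRing n) V
        + (((i : ℕ) : PowerSeries (AccRing n)) * (((i : ℕ) : PowerSeries (AccRing n)) + 1)
              * Ppoly n α
            - ((i : ℕ) : PowerSeries (AccRing n)) * X * derivative (AccRing n) (Ppoly n α)
            + X ^ 2 * P1poly n) * V)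
    (y : PowerSeries (AccRing n)) (hy : Lop n α y = 0) :
    Li (Lop n α (pd i y)) = 0 := by
  have key : Lop n α (pd i y) = X ^ (i : ℕ) * y := by
    have := pd_Lop i α y
    rw [hy] at this
    have h0 : pd i (0 : PowerSeries (AccRing n)) = 0 := by ext m; simp [pd_coeff]
    rw [h0] at this
    linear_combination -this
  have hDmul : ∀ u v : PowerSeries (AccRing n), derivative (AccRing n) (u * v)
      = derivative (AccRing n) u * v + u * derivative (AccRing n) v := fun u v => by
    rw [Derivation.leibniz, smul_eq_mul, smul_eq_mul]; ring
  have hd1 := hDmul (X ^ (i : ℕ)) y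
  have hd2 : derivative (AccRing n) (derivative (AccRing n) (X ^ (i : ℕ) * y))
      = derivative (AccRing n) (derivative (AccRing n) (X ^ (i : ℕ))) * y
        + 2 * derivative (AccRing n) (X ^ (i : ℕ)) * derivative (AccRing n) y
        + X ^ (i : ℕ) * derivative (AccRing n) (derivative (AccRing n) y) := by
    rw [hd1, map_add, hDmul, hDmul]; ring
  have hy' : derivative (AccRing n) (Ppoly n α) * derivative (AccRing n) y
      + Ppoly n α * derivative (AccRing n) (derivative (AccRing n) y) + P1poly n * y = 0 := by
    have h2 := hy
    rw [Lop, hDmul] at h2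
    linear_combination h2
  rw [key, hLi, hd2, hd1]
  linear_combination (X ^ 2 * X ^ (i : ℕ)) * hy'
    + (Ppoly n α * y) * hx2' (A := AccRing n) (i : ℕ)
    + (2 * X * Ppoly n α * derivative (AccRing n) y
        + X * derivative (AccRing n) (Ppoly n α) * y
        - 2 * ((i : ℕ) : PowerSeries (AccRing n)) * Ppoly n α * y) * hx1' (A := AccRing n) (i : ℕ)
end
end

section
/- For every c ∈ A there exists a unique power series y ∈ A⟦t⟧ with constant coefficient c satisfying L(y) = 0. In particular, the only power series solution of L(y) = 0 whose constant coefficient is 0 is y = 0. -/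
noncomputable section

open PowerSeries

lemma coeff_zero_Ppoly (n : ℕ) (α : Fin (n - 2) → ℂ) :
    (coeff (R := AccRing n) 0) (Ppoly n α) = 0 := by
  simp [Ppoly]

lemma coeff_one_Ppoly (n : ℕ) (α : Fin (n - 2) → ℂ) :
    (coeff (R := AccRing n) 1) (Ppoly n α) = MvPolynomial.C (kappa n α) := by
  rw [Ppoly, show (1:ℕ) = 0 + 1 from rfl, coeff_succ_X_mul]
  rw [coeff_zero_eq_constantCoeff, map_prod]
  simp only [map_sub, constantCoeff_X, constantCoeff_C, zero_sub]
  have h : ∀ x : Fin (n-2), -(MvPolynomial.C (α x) : AccRing n)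
      = MvPolynomial.C (-(α x)) := fun x => (map_neg _ _).symm
  rw [Finset.prod_congr rfl (fun x _ => h x), ← map_prod]
  congr 1
  have : ∏ x : Fin (n-2), -(α x) = ∏ x : Fin (n-2), (-1) * α x := by
    simp [neg_one_mul]
  rw [kappa, this, Finset.prod_mul_distrib, Finset.prod_const, Finset.card_univ,
    Fintype.card_fin]

lemma Lop_sub (n : ℕ) (α : Fin (n - 2) → ℂ) (u v : PowerSeries (AccRing n)) :
    Lop n α (u - v) = Lop n α u - Lop n α v := by
  simp only [Lop, map_sub, mul_sub]
  ring

lemma Lop_zero (n : ℕ) (α : Fin (n - 2) → ℂ) : Lop n α 0 = 0 := by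
  simp [Lop]

lemma crux (n : ℕ) (α : Fin (n - 2) → ℂ) (m : ℕ) (w : PowerSeries (AccRing n))
    (hw : ∀ k ≤ m, coeff (R := AccRing n) k w = 0) :
    coeff (R := AccRing n) m (Lop n α w)
      = MvPolynomial.C (kappa n α * ((m : ℂ) + 1) ^ 2) * coeff (R := AccRing n) (m+1) w := by
  rw [Lop, map_add]
  have h2 : coeff (R := AccRing n) m (P1poly n * w) = 0 := by
    rw [coeff_mul]
    apply Finset.sum_eq_zero
    intro p hp
    rw [Finset.HasAntidiagonal.mem_antidiagonal] at hp
    rw [hw p.2 (by omega), mul_zero]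
  have h1 : coeff (R := AccRing n) (m+1) (Ppoly n α * derivative (AccRing n) w)
      = MvPolynomial.C (kappa n α) * (coeff (R := AccRing n) (m+1) w * ((m : AccRing n) + 1)) := by
    rw [coeff_mul]
    rw [Finset.sum_eq_single_of_mem (1, m) (by rw [Finset.HasAntidiagonal.mem_antidiagonal]; omega)]
    · rw [coeff_one_Ppoly, coeff_derivative]
    · intro p hp hne
      rw [Finset.HasAntidiagonal.mem_antidiagonal] at hp
      rcases Nat.eq_zero_or_pos p.1 with h0 | h0
      · have : p = (0, m+1) := Prod.ext h0 (by omega)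
        rw [this]
        simp [coeff_zero_Ppoly]
      · have hp2 : p.1 ≠ 1 := by
          intro h1
          apply hne
          exact Prod.ext h1 (by omega)
        have : p.2 + 1 ≤ m := by omega
        rw [coeff_derivative, hw (p.2+1) this, zero_mul, mul_zero]
  rw [h2, add_zero, coeff_derivative, h1, map_mul, map_pow, map_add, map_one,
    map_natCast (MvPolynomial.C : ℂ →+* AccRing n)]
  push_cast
  ring

/-- truncation of a power series to degrees `≤ m`. -/
noncomputable def truncS (n : ℕ) (m : ℕ) (u : PowerSeries (AccRing n)) :
    PowerSeries (AccRing n) :=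
  PowerSeries.mk fun k => if k ≤ m then coeff (R := AccRing n) k u else 0

lemma step (n : ℕ) (α : Fin (n - 2) → ℂ) (u : PowerSeries (AccRing n)) (m : ℕ) :
    coeff (R := AccRing n) m (Lop n α u)
      = MvPolynomial.C (kappa n α * ((m : ℂ) + 1) ^ 2) * coeff (R := AccRing n) (m+1) u
        + coeff (R := AccRing n) m (Lop n α (truncS n m u)) := by
  have h := crux n α m (u - truncS n m u) (by
    intro k hk
    simp [truncS, map_sub, coeff_mk, if_pos hk])
  rw [Lop_sub, map_sub] at h
  have h2 : coeff (R := AccRing n) (m+1) (u - truncS n m u) = coeff (R := AccRing n) (m+1) u := by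
    simp [truncS, map_sub, coeff_mk]
  rw [h2] at h
  linear_combination h

lemma kappa_ne_zero (n : ℕ) (α : Fin (n - 2) → ℂ) (hα0 : ∀ j, α j ≠ 0) :
    kappa n α ≠ 0 :=
  mul_ne_zero (pow_ne_zero _ (neg_ne_zero.mpr one_ne_zero))
    (Finset.prod_ne_zero_iff.mpr fun j _ => hα0 j)

lemma kfac_ne_zero (n : ℕ) (α : Fin (n - 2) → ℂ) (hα0 : ∀ j, α j ≠ 0) (m : ℕ) :
    kappa n α * ((m : ℂ) + 1) ^ 2 ≠ 0 :=
  mul_ne_zero (kappa_ne_zero n α hα0)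
    (pow_ne_zero _ (Nat.cast_add_one_ne_zero m))

lemma Lop_uniq (n : ℕ) (α : Fin (n - 2) → ℂ) (hα0 : ∀ j, α j ≠ 0)
    (y : PowerSeries (AccRing n)) (hL : Lop n α y = 0)
    (h0 : constantCoeff (R := AccRing n) y = 0) : y = 0 := by
  have key : ∀ m, ∀ k ≤ m, coeff (R := AccRing n) k y = 0 := by
    intro m
    induction m with
    | zero =>
      intro k hk
      rw [Nat.le_zero] at hk
      subst hk
      rw [coeff_zero_eq_constantCoeff, h0]
    | succ m ih =>
      intro k hk
      by_cases hkm : k ≤ m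
      · exact ih k hkm
      · have hk1 : k = m + 1 := by omega
        subst hk1
        have hs := step n α y m
        rw [hL, map_zero] at hs
        have htr : truncS n m y = 0 := by
          refine PowerSeries.ext fun k => ?_
          rw [map_zero, truncS, coeff_mk]
          split_ifs with h
          · exact ih k h
          · rfl
        rw [htr, Lop_zero, map_zero, add_zero] at hs
        have hne := kfac_ne_zero n α hα0 m
        calc coeff (R := AccRing n) (m+1) y
            = MvPolynomial.C ((kappa n α * ((m : ℂ) + 1) ^ 2)⁻¹)
              * (MvPolynomial.C (kappa n α * ((m : ℂ) + 1) ^ 2)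
                * coeff (R := AccRing n) (m+1) y) := by
              rw [← mul_assoc, ← map_mul, inv_mul_cancel₀ hne, map_one, one_mul]
          _ = 0 := by rw [← hs, mul_zero]
  refine PowerSeries.ext fun k => ?_
  rw [map_zero, key k k le_rfl]


/-- Recursively defined coefficients of the solution. -/
noncomputable def sol (n : ℕ) (α : Fin (n - 2) → ℂ) (c : AccRing n) : ℕ → AccRing n
  | 0 => c
  | m + 1 => - (MvPolynomial.C ((kappa n α * ((m : ℂ) + 1) ^ 2)⁻¹) *
      PowerSeries.coeff (R := AccRing n) m (Lop n α (PowerSeries.mk fun k =>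
        if h : k ≤ m then sol n α c k else 0)))
  decreasing_by exact Nat.lt_succ_of_le h

lemma Lop_sol (n : ℕ) (α : Fin (n - 2) → ℂ) (hα0 : ∀ j, α j ≠ 0) (c : AccRing n) :
    Lop n α (PowerSeries.mk (sol n α c)) = 0 := by
  refine PowerSeries.ext fun m => ?_
  rw [map_zero, step n α _ m]
  have htr : truncS n m (PowerSeries.mk (sol n α c))
      = PowerSeries.mk fun k => if h : k ≤ m then sol n α c k else 0 := by
    refine PowerSeries.ext fun k => ?_
    rw [truncS, coeff_mk, coeff_mk, coeff_mk]
    split_ifs <;> rfl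
  rw [htr, coeff_mk]
  show MvPolynomial.C (kappa n α * ((m : ℂ) + 1) ^ 2) * sol n α c (m + 1) + _ = 0
  rw [sol]
  rw [mul_neg, ← mul_assoc, ← map_mul, mul_inv_cancel₀ (kfac_ne_zero n α hα0 m),
    map_one, one_mul, neg_add_cancel]


/-- for every `c ∈ A` there is a unique power series solution of `L(y) = 0`
with constant coefficient `c`; in particular the only solution with constant coefficient `0`
is `y = 0`. -/
theorem stmt3 (n : ℕ) (hn : 4 ≤ n) (α : Fin (n - 2) → ℂ)
    (hα0 : ∀ j, α j ≠ 0) (hαinj : Function.Injective α) :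
    (∀ c : AccRing n, ∃! y : PowerSeries (AccRing n),
        constantCoeff (R := AccRing n) y = c ∧ Lop n α y = 0) ∧
    (∀ y : PowerSeries (AccRing n),
        Lop n α y = 0 → constantCoeff (R := AccRing n) y = 0 → y = 0) := by
  constructor
  · intro c
    refine ⟨PowerSeries.mk (sol n α c), ⟨?_, Lop_sol n α hα0 c⟩, ?_⟩
    · rw [← coeff_zero_eq_constantCoeff_apply, coeff_mk, sol]
    · rintro z ⟨hz0, hzL⟩
      have hdiff : z - PowerSeries.mk (sol n α c) = 0 := by
        apply Lop_uniq n α hα0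
        · rw [Lop_sub, hzL, Lop_sol n α hα0 c, sub_zero]
        · rw [map_sub, hz0, ← coeff_zero_eq_constantCoeff_apply, coeff_mk]
          show c - sol n α c 0 = 0
          rw [sol, sub_self]
      exact sub_eq_zero.mp hdiff
  · exact fun y hL h0 => Lop_uniq n α hα0 y hL h0
end
end

section
/- Let y ∈ A⟦t⟧ with constant coefficient 1 satisfy L(y) = 0, and let b ∈ A⟦t⟧ with constant coefficient 0 satisfy L(b) + 2·P̂·y′ + P̂′·y = 0 (the condition that ŷ := y·log t + b is a logarithmic solution of L). Then P̂·y² + P·(y·b′ − y′·b) = κ as power series; that is, the Wronskian of the Frobenius basis {y, y·log t + b} equals the constant κ divided by P. -/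
noncomputable section

open PowerSeries

/-- the Wronskian identity `P̂·y² + P·(y·b' - y'·b) = κ` for the
Frobenius basis `{y, y·log t + b}`. -/
theorem stmt5 (n : ℕ) (hn : 4 ≤ n) (α : Fin (n - 2) → ℂ)
    (hα0 : ∀ j, α j ≠ 0) (hαinj : Function.Injective α)
    (y b : PowerSeries (AccRing n))
    (hy1 : constantCoeff (R := AccRing n) y = 1) (hy : Lop n α y = 0)
    (hb0 : constantCoeff (R := AccRing n) b = 0)
    (hb : Lop n α b + 2 * PhatPoly n α * derivative (AccRing n) y
        + derivative (AccRing n) (PhatPoly n α) * y = 0) :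
    PhatPoly n α * y ^ 2
        + Ppoly n α * (y * derivative (AccRing n) b - derivative (AccRing n) y * b)
      = C (R := AccRing n) (MvPolynomial.C (kappa n α)) := by
  have leib : ∀ u v : PowerSeries (AccRing n),
      derivative (AccRing n) (u * v)
        = u * derivative (AccRing n) v + v * derivative (AccRing n) u := fun u v => by
    simpa [smul_eq_mul] using (derivative (AccRing n)).leibniz u v
  set D := derivative (AccRing n) with hD
  have h1 : D (Ppoly n α) * D y + Ppoly n α * D (D y) = -(P1poly n * y) := by
    have h := hy
    unfold Lop at h
    rw [← hD, leib] at h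
    linear_combination h
  have h2 : D (Ppoly n α) * D b + Ppoly n α * D (D b)
      = -(P1poly n * b) - 2 * PhatPoly n α * D y - D (PhatPoly n α) * y := by
    have h := hb
    unfold Lop at h
    rw [← hD, leib] at h
    linear_combination h
  have hy2 : D (y ^ 2) = 2 * y * D y := by
    rw [sq, leib]; ring
  apply derivative.ext
  · rw [← hD, map_add, leib, leib, map_sub, leib, leib, hy2, derivative_C]
    linear_combination y * h2 - b * h1
  · simp only [map_add, map_mul, map_sub, map_pow, constantCoeff_C]
    have hP0 : constantCoeff (R := AccRing n) (Ppoly n α) = 0 := by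
      simp [Ppoly, map_mul]
    have hPh0 : constantCoeff (R := AccRing n) (PhatPoly n α) = MvPolynomial.C (kappa n α) := by
      simp only [PhatPoly, map_prod, map_sub, constantCoeff_X, constantCoeff_C, zero_sub, kappa]
      rw [map_mul, map_pow, map_neg, map_one, map_prod]
      have : ∀ x : Fin (n - 2), -MvPolynomial.C (R := ℂ) (σ := Fin (n-3)) (α x)
          = (-1) * MvPolynomial.C (α x) := fun x => by ring
      simp only [this, Finset.prod_mul_distrib, Finset.prod_const, Finset.card_univ,
        Fintype.card_fin]
    rw [hP0, hPh0, hy1]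
    ring
end
end

section
/- The power series Q satisfies the change-of-variable identity Q′·P·y² = κ·Q in A⟦t⟧ (the formal version of dQ/Q = κ·dt/(P·y²)). -/
noncomputable section

open PowerSeries

lemma coeff_pow_zero_of_lt {A : Type*} [CommRing A] {S : PowerSeries A}
    (hS : constantCoeff (R := A) S = 0) {m j : ℕ} (h : m < j) : coeff (R := A) m (S ^ j) = 0 :=
  PowerSeries.X_pow_dvd_iff.mp (pow_dvd_pow_of_dvd (PowerSeries.X_dvd_iff.mpr hS) j) m h

open Finset in
lemma derivative_expS {A : Type*} [CommRing A] [Algebra ℚ A] {S : PowerSeries A}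
    (hS : constantCoeff (R := A) S = 0) :
    derivative A (expS S) = derivative A S * expS S := by
  have he : ∀ i : ℕ, coeff (R := A) (i + 1) (exp A) * ((i : A) + 1) = coeff (R := A) i (exp A) := by
    intro i
    rw [coeff_exp, coeff_exp]
    have h1 : ((i : A) + 1) = algebraMap ℚ A ((i : ℚ) + 1) := by push_cast; ring
    rw [h1, ← map_mul]
    congr 1
    rw [Nat.factorial_succ]
    have h2 : ((i + 1 : ℕ) : ℚ) ≠ 0 := by positivity
    have h3 : (Nat.factorial i : ℚ) ≠ 0 := by exact_mod_cast Nat.factorial_ne_zero i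
    push_cast
    field_simp
  ext m
  rw [coeff_derivative]
  -- LHS
  have hL : coeff (R := A) (m + 1) (expS S) * ((m : A) + 1)
      = ∑ j ∈ range (m + 1), coeff (R := A) j (exp A) * coeff (R := A) m (S ^ j * derivative A S) := by
    rw [show coeff (R := A) (m+1) (expS S) = ∑ j ∈ range (m + 2), coeff (R := A) j (exp A) *
        coeff (R := A) (m+1) (S ^ j) by simp [expS, substS]]
    rw [Finset.sum_mul, Finset.sum_range_succ']
    rw [pow_zero, coeff_one, if_neg (Nat.succ_ne_zero m), mul_zero, zero_mul, add_zero]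
    apply Finset.sum_congr rfl
    intro i _
    have hd : coeff (R := A) m (derivative A (S ^ (i + 1))) = coeff (R := A) (m+1) (S ^ (i+1)) * ((m:A)+1) := by
      rw [coeff_derivative]
    have hp : derivative A (S ^ (i + 1)) = (i + 1) • (S ^ i * derivative A S) := by
      rw [Derivation.leibniz_pow]
      simp [smul_smul, Nat.add_sub_cancel, smul_eq_mul]
    rw [mul_assoc, ← hd, hp, map_nsmul, nsmul_eq_mul]
    push_cast
    rw [← mul_assoc, he i]
  rw [hL]
  -- RHS
  have hR : coeff (R := A) m (derivative A S * expS S)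
      = ∑ j ∈ range (m + 1), coeff (R := A) j (exp A) * coeff (R := A) m (S ^ j * derivative A S) := by
    rw [coeff_mul]
    have hcc : ∀ p ∈ antidiagonal m, coeff (R := A) p.1 (derivative A S) * coeff (R := A) p.2 (expS S)
        = ∑ j ∈ range (m + 1),
            coeff (R := A) j (exp A) * (coeff (R := A) p.1 (derivative A S) * coeff (R := A) p.2 (S ^ j)) := by
      intro p hp
      have hp2 : p.2 ≤ m := Finset.HasAntidiagonal.antidiagonal.snd_le hp
      rw [show coeff (R := A) p.2 (expS S) = ∑ j ∈ range (p.2 + 1), coeff (R := A) j (exp A) *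
          coeff (R := A) p.2 (S ^ j) by simp [expS, substS]]
      rw [Finset.mul_sum]
      rw [Finset.sum_subset (Finset.range_subset_range.mpr (Nat.succ_le_succ hp2))]
      · apply Finset.sum_congr rfl; intro j _; ring
      · intro j hj hj2
        simp only [Finset.mem_range, not_lt] at hj2
        rw [coeff_pow_zero_of_lt hS (by omega)]
        ring
    rw [Finset.sum_congr rfl hcc, Finset.sum_comm]
    apply Finset.sum_congr rfl
    intro j _
    rw [← Finset.mul_sum, ← coeff_mul, mul_comm (derivative A S)]
  rw [hR]

/-- the change-of-variable identity `Q'·P·y² = κ·Q`. -/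
theorem stmt6 (n : ℕ) (hn : 4 ≤ n) (α : Fin (n - 2) → ℂ)
    (hα0 : ∀ j, α j ≠ 0) (hαinj : Function.Injective α)
    (y b yinv Q : PowerSeries (AccRing n))
    (hy1 : constantCoeff (R := AccRing n) y = 1) (hy : Lop n α y = 0)
    (hb0 : constantCoeff (R := AccRing n) b = 0)
    (hb : Lop n α b + 2 * PhatPoly n α * derivative (AccRing n) y
        + derivative (AccRing n) (PhatPoly n α) * y = 0)
    (hyinv : y * yinv = 1)
    (hQ : Q = X * expS (b * yinv)) :
    derivative (AccRing n) Q * Ppoly n α * y ^ 2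
      = C (R := AccRing n) (MvPolynomial.C (kappa n α)) * Q := by
  have leib : ∀ u v : PowerSeries (AccRing n), derivative (AccRing n) (u * v)
      = u * derivative (AccRing n) v + v * derivative (AccRing n) u := fun u v => by
    rw [Derivation.leibniz]; simp [smul_eq_mul]
  have hPXP : Ppoly n α = X * PhatPoly n α := rfl
  have hdP : derivative (AccRing n) (Ppoly n α)
      = PhatPoly n α + X * derivative (AccRing n) (PhatPoly n α) := by
    rw [hPXP, leib, derivative_X, mul_one, add_comm]
  rw [Lop, leib, hdP, hPXP] at hy
  rw [Lop, leib, hdP, hPXP] at hb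
  -- the Wronskian identity
  have hW : PhatPoly n α * y ^ 2
      + (X * PhatPoly n α) * (derivative (AccRing n) b * y - derivative (AccRing n) y * b)
      = C (R := AccRing n) (MvPolynomial.C (kappa n α)) := by
    apply derivative.ext
    · rw [derivative_C, pow_two]
      simp only [map_add, map_sub, leib, derivative_X, mul_one]
      linear_combination y * hb - b * hy
    · have hccPh : constantCoeff (R := AccRing n) (PhatPoly n α) = MvPolynomial.C (kappa n α) := by
        rw [PhatPoly, map_prod, kappa]
        simp only [map_sub, constantCoeff_X, constantCoeff_C, zero_sub]
        rw [map_mul, map_pow, map_neg, map_one, map_prod]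
        have hneg : ∀ j : Fin (n-2), -(MvPolynomial.C (α j) : AccRing n)
            = (-1) * MvPolynomial.C (α j) := fun j => by ring
        rw [Finset.prod_congr rfl (fun j _ => hneg j), Finset.prod_mul_distrib,
          Finset.prod_const, Finset.card_univ, Fintype.card_fin]
      simp [map_add, map_mul, map_sub, map_pow, hy1, constantCoeff_X, hccPh]
  -- derivative of yinv
  have hyinv2 : derivative (AccRing n) y * yinv + y * derivative (AccRing n) yinv = 0 := by
    have h := congrArg (derivative (AccRing n)) hyinv
    rw [leib, Derivation.map_one_eq_zero] at h
    linear_combination h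
  have hccs : constantCoeff (R := AccRing n) (b * yinv) = 0 := by
    rw [map_mul, hb0, zero_mul]
  have hds : derivative (AccRing n) (b * yinv) * y ^ 2
      = derivative (AccRing n) b * y - derivative (AccRing n) y * b := by
    rw [leib]
    linear_combination (derivative (AccRing n) b * y - derivative (AccRing n) y * b) * hyinv
      + (b * y) * hyinv2
  have hdQ : derivative (AccRing n) (X * expS (b * yinv))
      = expS (b * yinv) + X * (derivative (AccRing n) (b * yinv) * expS (b * yinv)) := by
    rw [leib, derivative_X, mul_one, derivative_expS hccs]
    ring
  rw [hQ, hPXP]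
  linear_combination (X * PhatPoly n α * y ^ 2) * hdQ
    + (X * X * PhatPoly n α * expS (b * yinv)) * hds
    + (X * expS (b * yinv)) * hW
end
end

section
/- Assume ∂g_j = 2·h̃·(D g_j) + (k − 2j)·h̃′·g_j for all 0 ≤ j ≤ p, and ∂φ = h̃″ + 2·h̃·(Dφ) + 2·h̃′·φ. Then g := ∑_{j=0}^p g_j·φ^j satisfies ∂g = 2·h̃·(D g) + k·h̃′·g + h̃″·∑_{j=1}^p j·g_j·φ^{j−1}. (This is the algebraic core of the paper's main theorem: for a quasimodular form g = ∑ g_j φ^j of weight k on Γ, ∂_{i,Q} g = 2·h̃_i·D g + h̃_i′·W g + h̃_i″·δ g, where W is the weight operator and δ the depth-lowering operator determined by δφ = 1.) -/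
noncomputable section

open PowerSeries

/-- the algebraic core of the main theorem, for `∂ = ∂_{i,Q}`:
if `∂g_j = 2·h̃·Dg_j + (k-2j)·h̃'·g_j` and `∂φ = h̃'' + 2·h̃·Dφ + 2·h̃'·φ`, then
`g = ∑ g_j·φ^j` satisfies `∂g = 2·h̃·Dg + k·h̃'·g + h̃''·∑ j·g_j·φ^(j-1)`. -/
theorem stmt14 {R : Type*} [CommRing R] (D Dp : Derivation ℤ R R)
    (ht φ : R) (k : ℤ) (p : ℕ) (g : ℕ → R)
    (hg : ∀ j ≤ p, Dp (g j) = 2 * ht * D (g j) + ((k - 2 * (j : ℤ) : ℤ) : R) * D ht * g j)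
    (hφ : Dp φ = D (D ht) + 2 * ht * D φ + 2 * D ht * φ) :
    Dp (∑ j ∈ Finset.range (p + 1), g j * φ ^ j)
      = 2 * ht * D (∑ j ∈ Finset.range (p + 1), g j * φ ^ j)
        + (k : R) * D ht * (∑ j ∈ Finset.range (p + 1), g j * φ ^ j)
        + D (D ht) * ∑ j ∈ Finset.Icc 1 p, (j : R) * g j * φ ^ (j - 1) := by
  have hIcc : ∑ j ∈ Finset.Icc 1 p, (j : R) * g j * φ ^ (j - 1)
      = ∑ j ∈ Finset.range (p + 1), (j : R) * g j * φ ^ (j - 1) := by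
    have : Finset.range (p + 1) = insert 0 (Finset.Icc 1 p) := by
      ext x; simp [Finset.mem_range, Finset.mem_insert, Finset.mem_Icc]; omega
    rw [this, Finset.sum_insert (by simp)]
    simp
  rw [hIcc, map_sum, map_sum, Finset.mul_sum, Finset.mul_sum, Finset.mul_sum,
    ← Finset.sum_add_distrib, ← Finset.sum_add_distrib]
  refine Finset.sum_congr rfl fun j hj => ?_
  have hjp : j ≤ p := Nat.lt_succ_iff.mp (Finset.mem_range.mp hj)
  have hpow : (j : R) * (φ ^ (j - 1) * φ) = (j : R) * φ ^ j := by
    cases j with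
    | zero => simp
    | succ n => rw [Nat.succ_sub_one, pow_succ]
  rw [Derivation.leibniz, Derivation.leibniz_pow, Derivation.leibniz, Derivation.leibniz_pow,
    hg j hjp, hφ]
  push_cast
  simp only [smul_eq_mul, nsmul_eq_mul]
  linear_combination (2 * D ht * g j) * hpow
end
end

section
/- Assume ∂g_j = (k − 2j)·h̃′·g_j for all 0 ≤ j ≤ p, and ∂φ = h̃″ + 2·h̃′·φ. Then g := ∑_{j=0}^p g_j·φ^j satisfies ∂g = k·h̃′·g + h̃″·∑_{j=1}^p j·g_j·φ^{j−1}. (This is the algebraic core of the first formula of the paper's main theorem: for a quasimodular form g = ∑ g_j φ^j of weight k on Γ, ∂_{i,T} g = h̃_i′·W g + h̃_i″·δ g, where W is the weight operator and δ the depth-lowering operator determined by δφ = 1.) -/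
noncomputable section

open PowerSeries

/-- the algebraic core of the main theorem, for `∂ = ∂_{i,T}`:
if `∂g_j = (k-2j)·h̃'·g_j` and `∂φ = h̃'' + 2·h̃'·φ`, then `g = ∑ g_j·φ^j` satisfies
`∂g = k·h̃'·g + h̃''·∑ j·g_j·φ^(j-1)`. -/
theorem stmt15 {R : Type*} [CommRing R] (D Dp : Derivation ℤ R R)
    (ht φ : R) (k : ℤ) (p : ℕ) (g : ℕ → R)
    (hg : ∀ j ≤ p, Dp (g j) = ((k - 2 * (j : ℤ) : ℤ) : R) * D ht * g j)
    (hφ : Dp φ = D (D ht) + 2 * D ht * φ) :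
    Dp (∑ j ∈ Finset.range (p + 1), g j * φ ^ j)
      = (k : R) * D ht * (∑ j ∈ Finset.range (p + 1), g j * φ ^ j)
        + D (D ht) * ∑ j ∈ Finset.Icc 1 p, (j : R) * g j * φ ^ (j - 1) := by
  have key : ∀ j ∈ Finset.range (p + 1),
      Dp (g j * φ ^ j)
        = (k : R) * D ht * (g j * φ ^ j) + D (D ht) * ((j : R) * g j * φ ^ (j - 1)) := by
    intro j hj
    rw [Finset.mem_range, Nat.lt_succ_iff] at hj
    rw [Derivation.leibniz, Derivation.leibniz_pow, hg j hj, hφ, nsmul_eq_mul]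
    cases j with
    | zero => simp
    | succ m =>
      rw [Nat.add_sub_cancel, pow_succ]
      push_cast
      simp only [smul_eq_mul]
      ring
  rw [map_sum, Finset.sum_congr rfl key, Finset.sum_add_distrib, Finset.mul_sum,
    Finset.mul_sum]
  congr 1
  refine (Finset.sum_subset ?_ ?_).symm
  · intro j hj
    rw [Finset.mem_Icc] at hj
    simp [Nat.lt_succ_iff, hj.2]
  · intro j hj hj'
    rw [Finset.mem_range] at hj
    rw [Finset.mem_Icc] at hj'
    have : j = 0 := by omega
    simp [this]
end
end

section
/- Let r > 0 and let y, b : B(0,r) → ℂ be analytic functions on the open ball B(0,r) ⊆ ℂ such that (P·y′)′ + P1·y = 0 on B(0,r) and (P·b′)′ + P1·b + 2·P̂·y′ + P̂′·y = 0 on B(0,r). Then the function ŷ(t) := y(t)·log t + b(t) (with the principal branch of the complex logarithm) satisfies (P·ŷ′)′ + P1·ŷ = 0 at every point of B(0,r) not lying on the closed negative real axis. -/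
noncomputable section

open PowerSeries

/-- if `y`, `b` are analytic on `B(0,r)` with `(P·y')' + P1·y = 0` and
`(P·b')' + P1·b + 2·P̂·y' + P̂'·y = 0`, then `ŷ = y·log t + b` satisfies
`(P·ŷ')' + P1·ŷ = 0` away from the closed negative real axis. -/
theorem stmt17 (P P1 Phat : Polynomial ℂ) (hP0 : P.eval 0 = 0)
    (hPhat : P = Polynomial.X * Phat)
    (r : ℝ) (hr : 0 < r) (y b : ℂ → ℂ)
    (hy : AnalyticOnNhd ℂ y (Metric.ball (0 : ℂ) r))
    (hb : AnalyticOnNhd ℂ b (Metric.ball (0 : ℂ) r))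
    (hyODE : ∀ t ∈ Metric.ball (0 : ℂ) r,
      deriv (fun s => P.eval s * deriv y s) t + P1.eval t * y t = 0)
    (hbODE : ∀ t ∈ Metric.ball (0 : ℂ) r,
      deriv (fun s => P.eval s * deriv b s) t + P1.eval t * b t
        + 2 * Phat.eval t * deriv y t + (Polynomial.derivative Phat).eval t * y t = 0) :
    ∀ t ∈ Metric.ball (0 : ℂ) r, t ∈ Complex.slitPlane →
      deriv (fun s => P.eval s * deriv (fun z => y z * Complex.log z + b z) s) t
        + P1.eval t * (y t * Complex.log t + b t) = 0 := by
  intro t ht hts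
  have ht0 : t ≠ 0 := Complex.slitPlane_ne_zero hts
  have hPe : ∀ s : ℂ, P.eval s = s * Phat.eval s := by
    intro s; rw [hPhat]; simp
  have hU : IsOpen (Metric.ball (0 : ℂ) r ∩ Complex.slitPlane) :=
    Metric.isOpen_ball.inter Complex.isOpen_slitPlane
  have htU : t ∈ Metric.ball (0 : ℂ) r ∩ Complex.slitPlane := ⟨ht, hts⟩
  -- derivative of yhat on U
  have hderiv : ∀ s ∈ Metric.ball (0 : ℂ) r ∩ Complex.slitPlane,
      deriv (fun z => y z * Complex.log z + b z) s
        = deriv y s * Complex.log s + y s * s⁻¹ + deriv b s := by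
    rintro s ⟨hs, hs2⟩
    have h1 : HasDerivAt (fun z => y z * Complex.log z + b z)
        ((deriv y s * Complex.log s + y s * s⁻¹) + deriv b s) s :=
      (((hy s hs).differentiableAt.hasDerivAt.mul (Complex.hasDerivAt_log hs2))).add
        (hb s hs).differentiableAt.hasDerivAt
    rw [h1.deriv]
  -- the two functions agree on a neighborhood of t
  have heq : (fun s => P.eval s * deriv (fun z => y z * Complex.log z + b z) s)
      =ᶠ[nhds t] fun s => (P.eval s * deriv y s) * Complex.log s
        + Phat.eval s * y s + P.eval s * deriv b s := by
    filter_upwards [hU.mem_nhds htU] with s hs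
    rcases hs with ⟨hs1, hs2⟩
    have hs0 : s ≠ 0 := Complex.slitPlane_ne_zero hs2
    rw [hderiv s ⟨hs1, hs2⟩, hPe s]
    field_simp
  rw [heq.deriv_eq]
  -- differentiability of pieces at t
  have hdy : DifferentiableAt ℂ (deriv y) t := (hy.deriv t ht).differentiableAt
  have hdb : DifferentiableAt ℂ (deriv b) t := (hb.deriv t ht).differentiableAt
  have hPy : DifferentiableAt ℂ (fun s => P.eval s * deriv y s) t :=
    (P.differentiableAt).mul hdy
  have hPb : DifferentiableAt ℂ (fun s => P.eval s * deriv b s) t :=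
    (P.differentiableAt).mul hdb
  have hD : HasDerivAt (fun s => (P.eval s * deriv y s) * Complex.log s
      + Phat.eval s * y s + P.eval s * deriv b s)
      ((deriv (fun s => P.eval s * deriv y s) t * Complex.log t
          + (P.eval t * deriv y t) * t⁻¹)
        + ((Polynomial.derivative Phat).eval t * y t + Phat.eval t * deriv y t)
        + deriv (fun s => P.eval s * deriv b s) t) t :=
    ((hPy.hasDerivAt.mul (Complex.hasDerivAt_log hts)).add
      ((Phat.hasDerivAt t).mul (hy t ht).differentiableAt.hasDerivAt)).add
      hPb.hasDerivAt
  rw [hD.deriv]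
  have h1 := hyODE t ht
  have h2 := hbODE t ht
  have hinv : t * t⁻¹ = 1 := mul_inv_cancel₀ ht0
  have hPt : P.eval t = t * Phat.eval t := hPe t
  linear_combination Complex.log t * h1 + h2 + (Phat.eval t * deriv y t) * hinv
    + deriv y t * t⁻¹ * hPt
end
end
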